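/- Fix λ ∈ ℝ^d with λ ⪰ 0. The function x ↦ L(x,λ) = Φ(x) + Σ_{i=1}^n λ_iᵀ g_i(x_i) is β-smooth on Δ^n with β = n·A_max·Φ_max + γ·Σ_{i=1}^n Σ_{m=1}^{d_i} λ_{i,m}; in particular, if ‖λ‖₂ ≤ Λ then one may take β = n·A_max·Φ_max + √d·Λ·γ. -/

import Mathlib

open scoped BigOperators

noncomputable section

/-- The probability simplex `Δ(A_i) ⊆ ℝ^{|A_i|}` with the Euclidean norm. -/
def simplex (k : ℕ) : Set (EuclideanSpace ℝ (Fin k)) :=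
  {x | (∀ j, 0 ≤ x j) ∧ ∑ j, x j = 1}

/-- The joint strategy space with the Euclidean (ℓ²) norm. -/
abbrev Strat (n : ℕ) (A : Fin n → ℕ) := PiLp 2 fun i => EuclideanSpace ℝ (Fin (A i))

/-- The product of simplices `Δ^n = Δ(A_1) × ⋯ × Δ(A_n)`. -/
def prodSimplex (n : ℕ) (A : Fin n → ℕ) : Set (Strat n A) :=
  {x | ∀ i, x i ∈ simplex (A i)}

/-- The multilinear extension `Φ(x) = ∑_a φ(a) ∏_i x_i(a_i)` of `φ`. -/
def pot (n : ℕ) (A : Fin n → ℕ) (φ : (∀ i, Fin (A i)) → ℝ) (x : Strat n A) : ℝ :=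
  ∑ a : ∀ i, Fin (A i), φ a * ∏ i, x i (a i)

section LagAux

open Finset

def evalCLM (i : Fin n) (j : Fin (A i)) : Strat n A →L[ℝ] ℝ :=
  (EuclideanSpace.proj j).comp (PiLp.proj 2 _ i)

@[simp] lemma evalCLM_apply (i : Fin n) (j : Fin (A i)) (v : Strat n A) :
    evalCLM i j v = v i j := rfl

lemma hasFDerivAt_eval (i : Fin n) (j : Fin (A i)) (x : Strat n A) :
    HasFDerivAt (fun x : Strat n A => x i j) (evalCLM i j) x :=
  (evalCLM i j).hasFDerivAt

lemma norm_fderiv_sub_eq {F : Type*} [NormedAddCommGroup F] [InnerProductSpace ℝ F]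
    [CompleteSpace F] (f : F → ℝ) (z w : F) :
    ‖gradient f z - gradient f w‖ = ‖fderiv ℝ f z - fderiv ℝ f w‖ := by
  rw [gradient, gradient, ← LinearIsometryEquiv.map_sub, LinearIsometryEquiv.norm_map]

lemma sum_le_sqrt_card_mul {ι : Type*} [Fintype ι] (f : ι → ℝ) (hf : ∀ i, 0 ≤ f i) :
    ∑ i, f i ≤ Real.sqrt (Fintype.card ι) * Real.sqrt (∑ i, f i ^ 2) := by
  have h : (∑ i, f i) ^ 2 ≤ (Fintype.card ι : ℝ) * ∑ i, f i ^ 2 := by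
    exact_mod_cast sq_sum_le_card_mul_sum_sq (s := univ) (f := f)
  calc ∑ i, f i = Real.sqrt ((∑ i, f i) ^ 2) :=
        (Real.sqrt_sq (Finset.sum_nonneg fun i _ => hf i)).symm
    _ ≤ Real.sqrt ((Fintype.card ι : ℝ) * ∑ i, f i ^ 2) := Real.sqrt_le_sqrt h
    _ = _ := Real.sqrt_mul (by positivity) _

lemma pilp_apply_norm_le (z : Strat n A) (i : Fin n) : ‖z i‖ ≤ ‖z‖ := by
  have h : ‖z i‖ ^ 2 ≤ ‖z‖ ^ 2 := by
    conv_rhs => rw [PiLp.norm_sq_eq_of_L2]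
    exact Finset.single_le_sum (f := fun j => ‖z j‖ ^ 2) (fun j _ => by positivity) (mem_univ i)
  calc ‖z i‖ = Real.sqrt (‖z i‖ ^ 2) := (Real.sqrt_sq (norm_nonneg _)).symm
    _ ≤ Real.sqrt (‖z‖ ^ 2) := Real.sqrt_le_sqrt h
    _ = ‖z‖ := Real.sqrt_sq (norm_nonneg _)

lemma sum_norm_le_sqrt (z : Strat n A) : ∑ i, ‖z i‖ ≤ Real.sqrt n * ‖z‖ := by
  have := sum_le_sqrt_card_mul (fun i => ‖z i‖) (fun i => norm_nonneg _)
  simpa [PiLp.norm_eq_of_L2, Fintype.card_fin] using this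

lemma l1_le_sqrt {k : ℕ} (w : EuclideanSpace ℝ (Fin k)) :
    ∑ j, |w j| ≤ Real.sqrt k * ‖w‖ := by
  have := sum_le_sqrt_card_mul (fun j => |w j|) (fun j => abs_nonneg _)
  simpa [EuclideanSpace.norm_eq, Fintype.card_fin, Real.norm_eq_abs, sq_abs] using this

lemma prod_sub_prod_telescope {ι : Type*} [LinearOrder ι] (s : Finset ι) (f g : ι → ℝ) :
    (∏ l ∈ s, f l) - ∏ l ∈ s, g l =
      ∑ k ∈ s, (f k - g k) *
        ((∏ l ∈ s.filter (· < k), g l) * ∏ l ∈ s.filter (k < ·), f l) := by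
  classical
  induction s using Finset.induction_on_max with
  | empty => simp
  | insert a s ha ih =>
    have has : a ∉ s := fun h => lt_irrefl a (ha a h)
    rw [Finset.prod_insert has, Finset.prod_insert has, Finset.sum_insert has]
    have h1 : (insert a s).filter (· < a) = s := by
      rw [Finset.filter_insert]
      simp only [lt_irrefl, if_false]
      exact Finset.filter_true_of_mem fun b hb => ha b hb
    have h2 : (insert a s).filter (a < ·) = ∅ := by
      rw [Finset.filter_insert]
      simp only [lt_irrefl, if_false]
      exact Finset.filter_false_of_mem fun b hb => not_lt.mpr (le_of_lt (ha b hb))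
    rw [h1, h2]
    have h3 : ∀ k ∈ s, (f k - g k) *
        ((∏ l ∈ (insert a s).filter (· < k), g l) * ∏ l ∈ (insert a s).filter (k < ·), f l)
        = f a * ((f k - g k) * ((∏ l ∈ s.filter (· < k), g l) * ∏ l ∈ s.filter (k < ·), f l)) := by
      intro k hk
      have hka : k < a := ha k hk
      have e1 : (insert a s).filter (· < k) = s.filter (· < k) := by
        rw [Finset.filter_insert, if_neg (by exact not_lt.mpr (le_of_lt hka))]
      have e2 : (insert a s).filter (k < ·) = insert a (s.filter (k < ·)) := by
        rw [Finset.filter_insert, if_pos hka]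
      have e3 : a ∉ s.filter (k < ·) := fun h => has (Finset.mem_of_mem_filter a h)
      rw [e1, e2, Finset.prod_insert e3]
      ring
    rw [Finset.sum_congr rfl h3, ← Finset.mul_sum, ← ih]
    simp only [Finset.prod_empty]
    ring


variable {n : ℕ} {A : Fin n → ℕ}

lemma hasFDerivAt_pot (φ : (∀ i, Fin (A i)) → ℝ) (x : Strat n A) :
    HasFDerivAt (pot n A φ)
      (∑ a : ∀ i, Fin (A i), φ a •
        ∑ i, (∏ k ∈ univ.erase i, x k (a k)) • evalCLM i (a i)) x := by
  apply HasFDerivAt.fun_sum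
  intro a _
  exact ((HasFDerivAt.finset_prod (u := univ) (g := fun i x => x i (a i))
    (g' := fun i => evalCLM i (a i)) (fun i _ => (evalCLM i (a i)).hasFDerivAt))).const_mul (φ a)

/-- the key factorization identity -/
lemma sum_factor (x y v : Strat n A) (hx : x ∈ prodSimplex n A) (hy : y ∈ prodSimplex n A)
    (i k : Fin n) (hk : k ∈ univ.erase i) :
    ∑ a : ∀ l, Fin (A l), |x k (a k) - y k (a k)| *
        ((∏ l ∈ (univ.erase i).filter (· < k), y l (a l)) *
         ∏ l ∈ (univ.erase i).filter (k < ·), x l (a l)) * |v i (a i)|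
      = (∑ j, |x k j - y k j|) * (∑ j, |v i j|) := by
  classical
  have hki : k ≠ i := (Finset.mem_erase.mp hk).1
  set H : ∀ l, Fin (A l) → ℝ := fun l j =>
    if l = i then |v l j| else if l = k then |x l j - y l j|
    else if l < k then y l j else x l j with hH
  have key : ∀ a : ∀ l, Fin (A l), |x k (a k) - y k (a k)| *
        ((∏ l ∈ (univ.erase i).filter (· < k), y l (a l)) *
         ∏ l ∈ (univ.erase i).filter (k < ·), x l (a l)) * |v i (a i)|
      = ∏ l, H l (a l) := by
    intro a
    have e0 : (univ : Finset (Fin n)) = insert i (insert k ((univ.erase i).erase k)) := by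
      rw [Finset.insert_erase hk, Finset.insert_erase (mem_univ i)]
    conv_rhs => rw [e0]
    rw [Finset.prod_insert, Finset.prod_insert]
    · have hHi : H i (a i) = |v i (a i)| := by simp [hH]
      have hHk : H k (a k) = |x k (a k) - y k (a k)| := by simp [hH, hki]
      rw [hHi, hHk]
      have esplit : ((univ.erase i).erase k) =
          ((univ.erase i).filter (· < k)) ∪ ((univ.erase i).filter (k < ·)) := by
        ext l
        simp only [Finset.mem_erase, Finset.mem_union, Finset.mem_filter, Finset.mem_univ,
          and_true, true_and]
        constructor
        · rintro ⟨hlk, hli⟩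
          rcases lt_or_gt_of_ne hlk with h | h
          · exact Or.inl ⟨hli, h⟩
          · exact Or.inr ⟨hli, h⟩
        · rintro (⟨hli, h⟩ | ⟨hli, h⟩)
          · exact ⟨ne_of_lt h, hli⟩
          · exact ⟨ne_of_gt h, hli⟩
      have hdisj : Disjoint ((univ.erase i).filter (· < k)) ((univ.erase i).filter (k < ·)) := by
        rw [Finset.disjoint_left]
        intro l hl1 hl2
        have h1 := (Finset.mem_filter.mp hl1).2
        have h2 := (Finset.mem_filter.mp hl2).2
        exact absurd (lt_trans h1 h2) (lt_irrefl l)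
      rw [esplit, Finset.prod_union hdisj]
      have p1 : ∏ l ∈ (univ.erase i).filter (· < k), H l (a l)
          = ∏ l ∈ (univ.erase i).filter (· < k), y l (a l) := by
        apply Finset.prod_congr rfl
        intro l hl
        simp only [Finset.mem_filter, Finset.mem_erase] at hl
        simp [hH, hl.1.1, ne_of_lt hl.2, hl.2]
      have p2 : ∏ l ∈ (univ.erase i).filter (k < ·), H l (a l)
          = ∏ l ∈ (univ.erase i).filter (k < ·), x l (a l) := by
        apply Finset.prod_congr rfl
        intro l hl
        simp only [Finset.mem_filter, Finset.mem_erase] at hl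
        simp [hH, hl.1.1, (ne_of_gt hl.2), not_lt.mpr (le_of_lt hl.2)]
      rw [p1, p2]
      ring
    · simp
    · simp [Finset.mem_insert, hki.symm]
  rw [Finset.sum_congr rfl fun a _ => key a]
  rw [← Fintype.piFinset_univ, ← Finset.prod_univ_sum]
  -- now ∏ l, ∑ j, H l j
  have e0 : (univ : Finset (Fin n)) = insert i (insert k ((univ.erase i).erase k)) := by
    rw [Finset.insert_erase hk, Finset.insert_erase (mem_univ i)]
  conv_lhs => rw [e0]
  rw [Finset.prod_insert, Finset.prod_insert]
  · have hHi : (∑ j, H i j) = ∑ j, |v i j| := by simp [hH]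
    have hHk : (∑ j, H k j) = ∑ j, |x k j - y k j| := by simp [hH, hki]
    have hrest : ∏ l ∈ (univ.erase i).erase k, (∑ j, H l j) = 1 := by
      apply Finset.prod_eq_one
      intro l hl
      simp only [Finset.mem_erase] at hl
      by_cases hlt : l < k
      · have : (∑ j, H l j) = ∑ j, y l j := by
          apply Finset.sum_congr rfl; intro j _; simp [hH, hl.2.1, hl.1, hlt]
        rw [this]; exact (hy l).2
      · have : (∑ j, H l j) = ∑ j, x l j := by
          apply Finset.sum_congr rfl; intro j _; simp [hH, hl.2.1, hl.1, hlt]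
        rw [this]; exact (hx l).2
    rw [hHi, hHk, hrest]
    ring
  · simp
  · simp [Finset.mem_insert, hki.symm]

lemma pot_fderiv_apply (φ : (∀ i, Fin (A i)) → ℝ) (x v : Strat n A) :
    fderiv ℝ (pot n A φ) x v
      = ∑ a : ∀ i, Fin (A i), φ a * ∑ i, (∏ k ∈ univ.erase i, x k (a k)) * v i (a i) := by
  rw [(hasFDerivAt_pot φ x).fderiv]
  simp [ContinuousLinearMap.sum_apply, Finset.mul_sum]

lemma pot_bound (φ : (∀ i, Fin (A i)) → ℝ) (Φmax : ℝ) (hφ : ∀ a, |φ a| ≤ Φmax)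
    (Amax : ℕ) (hA : ∀ i, A i ≤ Amax)
    (x y : Strat n A) (hx : x ∈ prodSimplex n A) (hy : y ∈ prodSimplex n A) :
    ‖fderiv ℝ (pot n A φ) x - fderiv ℝ (pot n A φ) y‖
      ≤ ((n : ℝ) * Amax * Φmax) * ‖x - y‖ := by
  classical
  have hpos : ∀ i, 0 < A i := by
    intro i
    rcases Nat.eq_zero_or_pos (A i) with h | h
    · exfalso
      have h1 := (hx i).2
      haveI : IsEmpty (Fin (A i)) := by rw [h]; infer_instance
      rw [Finset.univ_eq_empty, Finset.sum_empty] at h1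
      exact zero_ne_one h1
    · exact h
  have hΦ0 : 0 ≤ Φmax := le_trans (abs_nonneg _) (hφ (fun i => ⟨0, hpos i⟩))
  apply ContinuousLinearMap.opNorm_le_bound _ (by positivity)
  intro v
  rw [Real.norm_eq_abs]
  have hval : (fderiv ℝ (pot n A φ) x - fderiv ℝ (pot n A φ) y) v
      = ∑ i, ∑ k ∈ univ.erase i, ∑ a : ∀ l, Fin (A l),
          φ a * ((x k (a k) - y k (a k)) *
            ((∏ l ∈ (univ.erase i).filter (· < k), y l (a l)) *
             ∏ l ∈ (univ.erase i).filter (k < ·), x l (a l))) * v i (a i) := by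
    rw [ContinuousLinearMap.sub_apply, pot_fderiv_apply, pot_fderiv_apply,
      ← Finset.sum_sub_distrib]
    have step1 : ∀ a : ∀ l, Fin (A l),
        (φ a * ∑ i, (∏ k ∈ univ.erase i, x k (a k)) * v i (a i)
          - φ a * ∑ i, (∏ k ∈ univ.erase i, y k (a k)) * v i (a i))
        = ∑ i, ∑ k ∈ univ.erase i,
            φ a * ((x k (a k) - y k (a k)) *
              ((∏ l ∈ (univ.erase i).filter (· < k), y l (a l)) *
               ∏ l ∈ (univ.erase i).filter (k < ·), x l (a l))) * v i (a i) := by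
      intro a
      rw [← mul_sub, ← Finset.sum_sub_distrib, Finset.mul_sum]
      refine Finset.sum_congr rfl fun i _ => ?_
      rw [← sub_mul, prod_sub_prod_telescope (univ.erase i)
        (fun l => x l (a l)) (fun l => y l (a l)), Finset.sum_mul, Finset.mul_sum]
      exact Finset.sum_congr rfl fun k _ => by ring
    simp only [step1]
    rw [Finset.sum_comm]
    exact Finset.sum_congr rfl fun i _ => Finset.sum_comm
  rw [hval]
  have hterm : ∀ i : Fin n, ∀ k ∈ univ.erase i,
      |∑ a : ∀ l, Fin (A l),
          φ a * ((x k (a k) - y k (a k)) *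
            ((∏ l ∈ (univ.erase i).filter (· < k), y l (a l)) *
             ∏ l ∈ (univ.erase i).filter (k < ·), x l (a l))) * v i (a i)|
        ≤ ((Amax : ℝ) * Φmax) * (‖x k - y k‖ * ‖v i‖) := by
    intro i k hk
    have hM : ∀ a : ∀ l, Fin (A l),
        0 ≤ (∏ l ∈ (univ.erase i).filter (· < k), y l (a l)) *
            ∏ l ∈ (univ.erase i).filter (k < ·), x l (a l) :=
      fun a => mul_nonneg
        (Finset.prod_nonneg fun l _ => (hy l).1 (a l))
        (Finset.prod_nonneg fun l _ => (hx l).1 (a l))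
    refine le_trans (Finset.abs_sum_le_sum_abs _ _) ?_
    have habs : ∀ a : ∀ l, Fin (A l),
        |φ a * ((x k (a k) - y k (a k)) *
            ((∏ l ∈ (univ.erase i).filter (· < k), y l (a l)) *
             ∏ l ∈ (univ.erase i).filter (k < ·), x l (a l))) * v i (a i)|
        ≤ Φmax * (|x k (a k) - y k (a k)| *
            ((∏ l ∈ (univ.erase i).filter (· < k), y l (a l)) *
             ∏ l ∈ (univ.erase i).filter (k < ·), x l (a l)) * |v i (a i)|) := by
      intro a
      rw [abs_mul, abs_mul, abs_mul, abs_of_nonneg (hM a)]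
      have hn : 0 ≤ |x k (a k) - y k (a k)| *
          ((∏ l ∈ (univ.erase i).filter (· < k), y l (a l)) *
           ∏ l ∈ (univ.erase i).filter (k < ·), x l (a l)) * |v i (a i)| :=
        mul_nonneg (mul_nonneg (abs_nonneg _) (hM a)) (abs_nonneg _)
      refine le_trans (le_of_eq (by ring)) (mul_le_mul_of_nonneg_right (hφ a) hn)
    refine le_trans (Finset.sum_le_sum fun a _ => habs a) ?_
    rw [← Finset.mul_sum, sum_factor x y v hx hy i k hk]
    have l1 : ∑ j, |x k j - y k j| ≤ Real.sqrt (A k) * ‖x k - y k‖ := by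
      have := l1_le_sqrt (x k - y k)
      simpa [PiLp.sub_apply] using this
    have l2 : ∑ j, |v i j| ≤ Real.sqrt (A i) * ‖v i‖ := l1_le_sqrt (v i)
    have hb : (∑ j, |x k j - y k j|) * (∑ j, |v i j|)
        ≤ (Real.sqrt Amax * ‖x k - y k‖) * (Real.sqrt Amax * ‖v i‖) := by
      have hk1 : Real.sqrt (A k) * ‖x k - y k‖ ≤ Real.sqrt Amax * ‖x k - y k‖ :=
        mul_le_mul_of_nonneg_right
          (Real.sqrt_le_sqrt (by exact_mod_cast hA k)) (norm_nonneg _)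
      have hk2 : Real.sqrt (A i) * ‖v i‖ ≤ Real.sqrt Amax * ‖v i‖ :=
        mul_le_mul_of_nonneg_right
          (Real.sqrt_le_sqrt (by exact_mod_cast hA i)) (norm_nonneg _)
      exact mul_le_mul (le_trans l1 hk1) (le_trans l2 hk2)
        (Finset.sum_nonneg fun j _ => abs_nonneg _) (by positivity)
    refine le_trans (mul_le_mul_of_nonneg_left hb hΦ0) (le_of_eq ?_)
    rw [show (Real.sqrt Amax * ‖x k - y k‖) * (Real.sqrt Amax * ‖v i‖)
        = (Real.sqrt Amax * Real.sqrt Amax) * (‖x k - y k‖ * ‖v i‖) by ring,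
      Real.mul_self_sqrt (by positivity)]
    ring
  refine le_trans (Finset.abs_sum_le_sum_abs _ _) ?_
  refine le_trans (Finset.sum_le_sum fun i _ => Finset.abs_sum_le_sum_abs _ _) ?_
  refine le_trans (Finset.sum_le_sum fun i (_ : i ∈ univ) =>
    Finset.sum_le_sum fun k hk => hterm i k hk) ?_
  refine le_trans (Finset.sum_le_sum fun i (_ : i ∈ univ) =>
    Finset.sum_le_sum_of_subset_of_nonneg (Finset.erase_subset _ _)
      fun k _ _ => by positivity) ?_
  have h2 : (∑ k, ‖x k - y k‖) * (∑ i, ‖v i‖) = ∑ i, ∑ k, ‖x k - y k‖ * ‖v i‖ := by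
    rw [Finset.sum_mul_sum]
    exact Finset.sum_comm
  have heq : ∑ i, ∑ k, ((Amax : ℝ) * Φmax) * (‖x k - y k‖ * ‖v i‖)
      = ((Amax : ℝ) * Φmax) * ((∑ k, ‖x k - y k‖) * (∑ i, ‖v i‖)) := by
    rw [h2, Finset.mul_sum]
    exact Finset.sum_congr rfl fun i _ => by rw [Finset.mul_sum]
  rw [heq]
  have s1 : ∑ k, ‖x k - y k‖ ≤ Real.sqrt n * ‖x - y‖ := by
    have := sum_norm_le_sqrt (x - y)
    simpa [PiLp.sub_apply] using this
  have s2 : ∑ i, ‖v i‖ ≤ Real.sqrt n * ‖v‖ := sum_norm_le_sqrt v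
  have hb : (∑ k, ‖x k - y k‖) * (∑ i, ‖v i‖)
      ≤ (Real.sqrt n * ‖x - y‖) * (Real.sqrt n * ‖v‖) :=
    mul_le_mul s1 s2 (Finset.sum_nonneg fun i _ => norm_nonneg _) (by positivity)
  refine le_trans (mul_le_mul_of_nonneg_left hb (by positivity)) (le_of_eq ?_)
  rw [show (Real.sqrt n * ‖x - y‖) * (Real.sqrt n * ‖v‖)
      = (Real.sqrt n * Real.sqrt n) * (‖x - y‖ * ‖v‖) by ring,
    Real.mul_self_sqrt (by positivity)]
  ring

lemma norm_fderiv_sub_eq' {F : Type*} [NormedAddCommGroup F] [InnerProductSpace ℝ F]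
    [CompleteSpace F] (f : F → ℝ) (z w : F) :
    ‖gradient f z - gradient f w‖ = ‖fderiv ℝ f z - fderiv ℝ f w‖ := by
  rw [gradient, gradient, ← LinearIsometryEquiv.map_sub, LinearIsometryEquiv.norm_map]

lemma hasFDerivAt_G (d : Fin n → ℕ) (g : ∀ i, Fin (d i) → EuclideanSpace ℝ (Fin (A i)) → ℝ)
    (hgdiff : ∀ i m, Differentiable ℝ (g i m)) (lam : ∀ i, Fin (d i) → ℝ) (x : Strat n A) :
    HasFDerivAt (fun x : Strat n A => ∑ i, ∑ m, lam i m * g i m (x i))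
      (∑ i, ∑ m, lam i m • ((fderiv ℝ (g i m) (x i)).comp
        (PiLp.proj (𝕜 := ℝ) 2 (fun i => EuclideanSpace ℝ (Fin (A i))) i))) x := by
  apply HasFDerivAt.fun_sum
  intro i _
  apply HasFDerivAt.fun_sum
  intro m _
  have hproj : HasFDerivAt (fun z : Strat n A => z i)
      (PiLp.proj (𝕜 := ℝ) 2 (fun i => EuclideanSpace ℝ (Fin (A i))) i) x :=
    (PiLp.proj (𝕜 := ℝ) 2 (fun i => EuclideanSpace ℝ (Fin (A i))) i).hasFDerivAt
  have h1 : HasFDerivAt (fun x : Strat n A => g i m (x i))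
      ((fderiv ℝ (g i m) (x i)).comp (PiLp.proj (𝕜 := ℝ) 2 (fun i => EuclideanSpace ℝ (Fin (A i))) i)) x :=
    ((hgdiff i m (x i)).hasFDerivAt).comp x hproj
  exact h1.const_mul _

lemma G_bound (d : Fin n → ℕ) (g : ∀ i, Fin (d i) → EuclideanSpace ℝ (Fin (A i)) → ℝ)
    (γ : ℝ) (hγ : 0 ≤ γ)
    (hgsmooth : ∀ i m, LipschitzWith γ.toNNReal (gradient (g i m)))
    (lam : ∀ i, Fin (d i) → ℝ) (hlam : ∀ i m, 0 ≤ lam i m) (x y : Strat n A) :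
    ‖(∑ i, ∑ m, lam i m • ((fderiv ℝ (g i m) (x i)).comp
        (PiLp.proj (𝕜 := ℝ) 2 (fun i => EuclideanSpace ℝ (Fin (A i))) i)))
      - (∑ i, ∑ m, lam i m • ((fderiv ℝ (g i m) (y i)).comp
        (PiLp.proj (𝕜 := ℝ) 2 (fun i => EuclideanSpace ℝ (Fin (A i))) i)))‖
      ≤ (γ * ∑ i, ∑ m, lam i m) * ‖x - y‖ := by
  have hsum : 0 ≤ ∑ i, ∑ m, lam i m :=
    Finset.sum_nonneg fun i _ => Finset.sum_nonneg fun m _ => hlam i m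
  apply ContinuousLinearMap.opNorm_le_bound _ (by positivity)
  intro v
  rw [Real.norm_eq_abs]
  have hval : ((∑ i, ∑ m, lam i m • ((fderiv ℝ (g i m) (x i)).comp
        (PiLp.proj (𝕜 := ℝ) 2 (fun i => EuclideanSpace ℝ (Fin (A i))) i)))
      - (∑ i, ∑ m, lam i m • ((fderiv ℝ (g i m) (y i)).comp
        (PiLp.proj (𝕜 := ℝ) 2 (fun i => EuclideanSpace ℝ (Fin (A i))) i)))) v
      = ∑ i, ∑ m, lam i m * ((fderiv ℝ (g i m) (x i) - fderiv ℝ (g i m) (y i)) (v i)) := by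
    simp only [ContinuousLinearMap.sub_apply, ContinuousLinearMap.coe_sum', Finset.sum_apply,
      ContinuousLinearMap.coe_smul', Pi.smul_apply, ContinuousLinearMap.coe_comp',
      Function.comp_apply, PiLp.proj_apply, smul_eq_mul, ← Finset.sum_sub_distrib]
    exact Finset.sum_congr rfl fun i _ => Finset.sum_congr rfl fun m _ => by ring
  rw [hval]
  have hterm : ∀ i : Fin n, ∀ m : Fin (d i),
      |lam i m * ((fderiv ℝ (g i m) (x i) - fderiv ℝ (g i m) (y i)) (v i))|
        ≤ lam i m * (γ * (‖x - y‖ * ‖v‖)) := by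
    intro i m
    rw [abs_mul, abs_of_nonneg (hlam i m)]
    refine mul_le_mul_of_nonneg_left ?_ (hlam i m)
    have h1 : |(fderiv ℝ (g i m) (x i) - fderiv ℝ (g i m) (y i)) (v i)|
        ≤ ‖fderiv ℝ (g i m) (x i) - fderiv ℝ (g i m) (y i)‖ * ‖v i‖ := by
      rw [← Real.norm_eq_abs]
      exact ContinuousLinearMap.le_opNorm _ _
    have h2 : ‖fderiv ℝ (g i m) (x i) - fderiv ℝ (g i m) (y i)‖ ≤ γ * ‖x i - y i‖ := by
      rw [← norm_fderiv_sub_eq']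
      have := (hgsmooth i m).dist_le_mul (x i) (y i)
      rw [dist_eq_norm, dist_eq_norm, Real.coe_toNNReal γ hγ] at this
      exact this
    refine le_trans h1 ?_
    have h3 : ‖x i - y i‖ ≤ ‖x - y‖ := by
      have := pilp_apply_norm_le (x - y) i
      simpa [PiLp.sub_apply] using this
    have h4 : ‖v i‖ ≤ ‖v‖ := pilp_apply_norm_le v i
    calc ‖fderiv ℝ (g i m) (x i) - fderiv ℝ (g i m) (y i)‖ * ‖v i‖
        ≤ (γ * ‖x i - y i‖) * ‖v i‖ := mul_le_mul_of_nonneg_right h2 (norm_nonneg _)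
      _ ≤ (γ * ‖x - y‖) * ‖v‖ := by
          refine mul_le_mul (mul_le_mul_of_nonneg_left h3 hγ) h4 (norm_nonneg _) (by positivity)
      _ = γ * (‖x - y‖ * ‖v‖) := by ring
  refine le_trans (Finset.abs_sum_le_sum_abs _ _) ?_
  refine le_trans (Finset.sum_le_sum fun i _ => Finset.abs_sum_le_sum_abs _ _) ?_
  refine le_trans (Finset.sum_le_sum fun i _ => Finset.sum_le_sum fun m _ => hterm i m) ?_
  have : ∑ i, ∑ m, lam i m * (γ * (‖x - y‖ * ‖v‖))
      = (∑ i, ∑ m, lam i m) * (γ * (‖x - y‖ * ‖v‖)) := by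
    rw [Finset.sum_mul]
    exact Finset.sum_congr rfl fun i _ => by rw [Finset.sum_mul]
  rw [this]
  ring_nf
  exact le_of_eq (by ring)

end LagAux

open Finset in
/-- **Smoothness of the Lagrangian in `x` for a fixed multiplier `λ ⪰ 0`.**
With `Φ` the multilinear extension of `φ` (`|φ(a)| ≤ Φmax`, `|A_i| ≤ Amax`) and each
constraint `g i m` convex, differentiable and `γ`-smooth, the function
`x ↦ L(x,λ) = Φ(x) + ∑_i ∑_m λ_{i,m} g_{i,m}(x_i)` is `β`-smooth on `Δ^n` with
`β = n·Amax·Φmax + γ·∑_{i,m} λ_{i,m}`; and if moreover `‖λ‖₂ ≤ Λ` one may take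
`β = n·Amax·Φmax + √d·Λ·γ` where `d = ∑_i d_i`. -/
theorem lagrangian_smooth_in_x (n : ℕ) (A : Fin n → ℕ) (φ : (∀ i, Fin (A i)) → ℝ)
    (Φmax : ℝ) (hφ : ∀ a, |φ a| ≤ Φmax)
    (Amax : ℕ) (hA : ∀ i, A i ≤ Amax)
    (d : Fin n → ℕ) (g : ∀ i, Fin (d i) → EuclideanSpace ℝ (Fin (A i)) → ℝ)
    (γ : ℝ) (hγ : 0 ≤ γ)
    (hgconv : ∀ i m, ConvexOn ℝ Set.univ (g i m))
    (hgdiff : ∀ i m, Differentiable ℝ (g i m))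
    (hgsmooth : ∀ i m, LipschitzWith γ.toNNReal (gradient (g i m)))
    (lam : ∀ i, Fin (d i) → ℝ) (hlam : ∀ i m, 0 ≤ lam i m) (Λ : ℝ) :
    LipschitzOnWith ((n : ℝ) * Amax * Φmax + γ * ∑ i, ∑ m, lam i m).toNNReal
      (gradient fun x : Strat n A => pot n A φ x + ∑ i, ∑ m, lam i m * g i m (x i))
      (prodSimplex n A) ∧
    (Real.sqrt (∑ i, ∑ m, (lam i m) ^ 2) ≤ Λ →
      LipschitzOnWith
        ((n : ℝ) * Amax * Φmax + Real.sqrt (∑ i, (d i : ℝ)) * Λ * γ).toNNReal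
        (gradient fun x : Strat n A => pot n A φ x + ∑ i, ∑ m, lam i m * g i m (x i))
        (prodSimplex n A)) := by
  have hF : ∀ x : Strat n A,
      HasFDerivAt (fun x : Strat n A => pot n A φ x + ∑ i, ∑ m, lam i m * g i m (x i))
        ((∑ a : ∀ i, Fin (A i), φ a •
            ∑ i, (∏ k ∈ univ.erase i, x k (a k)) • evalCLM i (a i))
          + (∑ i, ∑ m, lam i m • ((fderiv ℝ (g i m) (x i)).comp
              (PiLp.proj (𝕜 := ℝ) 2 (fun i => EuclideanSpace ℝ (Fin (A i))) i)))) x :=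
    fun x => (hasFDerivAt_pot φ x).add (hasFDerivAt_G d g hgdiff lam x)
  have master : ∀ x ∈ prodSimplex n A, ∀ y ∈ prodSimplex n A,
      dist (gradient (fun x : Strat n A =>
          pot n A φ x + ∑ i, ∑ m, lam i m * g i m (x i)) x)
        (gradient (fun x : Strat n A =>
          pot n A φ x + ∑ i, ∑ m, lam i m * g i m (x i)) y)
      ≤ ((n : ℝ) * Amax * Φmax + γ * ∑ i, ∑ m, lam i m) * dist x y := by
    intro x hx y hy
    rw [dist_eq_norm, dist_eq_norm, norm_fderiv_sub_eq', (hF x).fderiv, (hF y).fderiv,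
      ← (hasFDerivAt_pot φ x).fderiv, ← (hasFDerivAt_pot φ y).fderiv]
    rw [add_sub_add_comm]
    refine le_trans (norm_add_le _ _) ?_
    refine le_trans (add_le_add (pot_bound φ Φmax hφ Amax hA x y hx hy)
      (G_bound d g γ hγ hgsmooth lam hlam x y)) ?_
    exact le_of_eq (by ring)
  constructor
  · exact LipschitzOnWith.of_dist_le' master
  · intro hΛ
    apply LipschitzOnWith.of_dist_le'
    intro x hx y hy
    refine le_trans (master x hx y hy) ?_
    have hΛ0 : 0 ≤ Λ := le_trans (Real.sqrt_nonneg _) hΛ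
    have h1 : ∑ i, ∑ m, lam i m ≤ Real.sqrt (∑ i, (d i : ℝ)) * Λ := by
      have hs := sum_le_sqrt_card_mul (ι := (Σ i : Fin n, Fin (d i)))
        (fun p => lam p.1 p.2) (fun p => hlam p.1 p.2)
      rw [Fintype.card_sigma] at hs
      simp only [Fintype.card_fin] at hs
      have e1 : ∑ p : Σ i : Fin n, Fin (d i), lam p.1 p.2 = ∑ i, ∑ m, lam i m := by
        rw [← Finset.univ_sigma_univ, Finset.sum_sigma]
      have e2 : ∑ p : Σ i : Fin n, Fin (d i), lam p.1 p.2 ^ 2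
          = ∑ i, ∑ m, lam i m ^ 2 := by
        rw [← Finset.univ_sigma_univ, Finset.sum_sigma]
      rw [e1, e2] at hs
      have hcast : ((∑ i, d i : ℕ) : ℝ) = ∑ i, (d i : ℝ) := by push_cast; rfl
      rw [hcast] at hs
      refine le_trans hs ?_
      exact mul_le_mul_of_nonneg_left hΛ (Real.sqrt_nonneg _)
    have hβ : (n : ℝ) * Amax * Φmax + γ * ∑ i, ∑ m, lam i m
        ≤ (n : ℝ) * Amax * Φmax + Real.sqrt (∑ i, (d i : ℝ)) * Λ * γ := by
      have h2 : γ * ∑ i, ∑ m, lam i m ≤ γ * (Real.sqrt (∑ i, (d i : ℝ)) * Λ) :=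
        mul_le_mul_of_nonneg_left h1 hγ
      nlinarith [h2]
    exact mul_le_mul_of_nonneg_right hβ dist_nonneg

end
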